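/- Let B = (b_{ij}) be an n×n real matrix with n ≥ 2. Define σ₁(B) = ∑_i b_{ii}, σ₁(B|k) = σ₁(B) − b_{kk}, and σ₂(B) = ∑_{i<j} (b_{ii} b_{jj} − b_{ij} b_{ji}). Then for each 1 ≤ k ≤ n: σ₁(B)·σ₁(B|k) = σ₂(B) + (n/(2(n−1)))·(σ₁(B|k))² + ∑_{i<j} b_{ij} b_{ji} + (1/(2(n−1)))·∑_{i<j, i≠k, j≠k} (b_{ii} − b_{jj})², where the last sum is empty (zero) when n = 2. -/

import Mathlib

open Finset

lemma double_count {n : ℕ} (s : Finset (Fin n)) (f : Fin n → Fin n → ℝ)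
    (hf : ∀ i j, f i j = f j i) :
    2 * ∑ i ∈ s, ∑ j ∈ s.filter (fun j => i < j), f i j
      = (∑ i ∈ s, ∑ j ∈ s, f i j) - ∑ i ∈ s, f i i := by
  have hA : ∑ i ∈ s, ∑ j ∈ s.filter (fun j => i < j), f i j
      = ∑ i ∈ s, ∑ j ∈ s, if i < j then f i j else 0 :=
    Finset.sum_congr rfl fun i _ => Finset.sum_filter _ _
  have hB : (∑ i ∈ s, ∑ j ∈ s, if i < j then f i j else 0)
      = ∑ i ∈ s, ∑ j ∈ s, if j < i then f i j else 0 := by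
    rw [Finset.sum_comm]
    refine Finset.sum_congr rfl fun i _ => Finset.sum_congr rfl fun j _ => ?_
    by_cases h : j < i <;> simp [h, hf]
  have hC : (∑ i ∈ s, ∑ j ∈ s, ((if i < j then f i j else 0) + if j < i then f i j else 0))
      = ∑ i ∈ s, ∑ j ∈ s, (f i j - if i = j then f i j else 0) := by
    refine Finset.sum_congr rfl fun i _ => Finset.sum_congr rfl fun j _ => ?_
    rcases lt_trichotomy i j with h | h | h
    · simp [h, h.ne, not_lt_of_gt h]
    · simp [h]
    · simp [h, h.ne', not_lt_of_gt h]
  have hD : ∀ i ∈ s, (∑ j ∈ s, (f i j - if i = j then f i j else 0))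
      = (∑ j ∈ s, f i j) - f i i := by
    intro i hi
    rw [Finset.sum_sub_distrib, Finset.sum_ite_eq s i (fun j => f i j), if_pos hi]
  calc 2 * ∑ i ∈ s, ∑ j ∈ s.filter (fun j => i < j), f i j
      = (∑ i ∈ s, ∑ j ∈ s, if i < j then f i j else 0)
        + ∑ i ∈ s, ∑ j ∈ s, if j < i then f i j else 0 := by rw [← hB, hA]; ring
    _ = ∑ i ∈ s, ∑ j ∈ s, ((if i < j then f i j else 0) + if j < i then f i j else 0) := by
        rw [← Finset.sum_add_distrib]
        exact Finset.sum_congr rfl fun i _ => (Finset.sum_add_distrib).symm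
    _ = ∑ i ∈ s, ((∑ j ∈ s, f i j) - f i i) := by
        rw [hC]; exact Finset.sum_congr rfl hD
    _ = (∑ i ∈ s, ∑ j ∈ s, f i j) - ∑ i ∈ s, f i i := Finset.sum_sub_distrib _ _

theorem sigma_identity (n : ℕ) (hn : 2 ≤ n) (B : Matrix (Fin n) (Fin n) ℝ) (k : Fin n) :
    (∑ i, B i i) * ((∑ i, B i i) - B k k)
      = (∑ i, ∑ j ∈ univ.filter (fun j => i < j), (B i i * B j j - B i j * B j i))
        + ((n : ℝ) / (2 * ((n : ℝ) - 1))) * ((∑ i, B i i) - B k k) ^ 2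
        + (∑ i, ∑ j ∈ univ.filter (fun j => i < j), B i j * B j i)
        + (1 / (2 * ((n : ℝ) - 1))) *
            (∑ i ∈ univ.filter (fun i => i ≠ k),
              ∑ j ∈ univ.filter (fun j => i < j ∧ j ≠ k), (B i i - B j j) ^ 2) := by
  have hm : (n : ℝ) - 1 ≠ 0 := by
    have : (2:ℝ) ≤ (n:ℝ) := by exact_mod_cast hn
    linarith
  set s : Finset (Fin n) := univ.filter (fun i => i ≠ k) with hs
  -- rewrite inner filter of the last sum
  have hfilt : ∀ i : Fin n, (univ.filter (fun j => i < j ∧ j ≠ k) : Finset (Fin n))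
      = s.filter (fun j => i < j) := by
    intro i
    rw [hs, Finset.filter_filter]
    exact Finset.filter_congr fun j _ => by tauto
  have hcard : (s.card : ℝ) = (n : ℝ) - 1 := by
    rw [hs, Finset.filter_ne', Finset.card_erase_of_mem (mem_univ k), Finset.card_univ,
      Fintype.card_fin]
    have : 1 ≤ n := by omega
    push_cast [Nat.cast_sub this]
    ring
  have hT : ∑ i ∈ s, B i i = (∑ i, B i i) - B k k := by
    rw [hs, Finset.filter_ne']
    exact Finset.sum_erase_eq_sub (mem_univ k)
  have hQ : ∑ i ∈ s, B i i ^ 2 = (∑ i, B i i ^ 2) - B k k ^ 2 := by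
    rw [hs, Finset.filter_ne']
    exact Finset.sum_erase_eq_sub (mem_univ k)
  -- key 1 : pairs of products over univ
  have h1 : 2 * ∑ i, ∑ j ∈ univ.filter (fun j => i < j), B i i * B j j
      = (∑ i, B i i) * (∑ i, B i i) - ∑ i, B i i ^ 2 := by
    have hd1 := double_count (univ : Finset (Fin n)) (fun i j => B i i * B j j)
      (fun i j => by ring)
    beta_reduce at hd1
    rw [hd1, ← Finset.sum_mul_sum]
    simp [sq]
  -- key 2 : squared differences over s
  have h2 : 2 * ∑ i ∈ s, ∑ j ∈ s.filter (fun j => i < j), (B i i - B j j) ^ 2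
      = 2 * (((n:ℝ) - 1) * (∑ i ∈ s, B i i ^ 2)
          - (∑ i ∈ s, B i i) * (∑ i ∈ s, B i i)) := by
    have hd := double_count s (fun i j => (B i i - B j j) ^ 2) (fun i j => by ring)
    have hexp : ∑ i ∈ s, ∑ j ∈ s, (B i i - B j j) ^ 2
        = (s.card : ℝ) * (∑ i ∈ s, B i i ^ 2)
          - 2 * (∑ i ∈ s, B i i) * (∑ i ∈ s, B i i)
          + (s.card : ℝ) * (∑ i ∈ s, B i i ^ 2) := by
      have : ∀ i ∈ s, ∑ j ∈ s, (B i i - B j j) ^ 2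
          = (s.card : ℝ) * B i i ^ 2 - 2 * B i i * (∑ j ∈ s, B j j)
            + ∑ j ∈ s, B j j ^ 2 := by
        intro i _
        calc ∑ j ∈ s, (B i i - B j j) ^ 2
            = ∑ j ∈ s, (B i i ^ 2 - 2 * B i i * B j j + B j j ^ 2) :=
              Finset.sum_congr rfl fun j _ => by ring
          _ = (s.card : ℝ) * B i i ^ 2 - 2 * B i i * (∑ j ∈ s, B j j)
              + ∑ j ∈ s, B j j ^ 2 := by
              rw [Finset.sum_add_distrib, Finset.sum_sub_distrib, Finset.sum_const,
                nsmul_eq_mul, ← Finset.mul_sum]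
      rw [Finset.sum_congr rfl this]
      simp only [Finset.sum_add_distrib, Finset.sum_sub_distrib, Finset.sum_const,
        nsmul_eq_mul]
      rw [← Finset.sum_mul,
        show (∑ x ∈ s, 2 * B x x) = 2 * ∑ x ∈ s, B x x from by rw [Finset.mul_sum],
        show (∑ x ∈ s, (s.card : ℝ) * B x x ^ 2) = (s.card : ℝ) * ∑ x ∈ s, B x x ^ 2 from by
          rw [Finset.mul_sum]]
    have hdiag : ∑ i ∈ s, ((fun i j => (B i i - B j j) ^ 2) i i) = 0 := by simp
    simp only at hd hdiag
    rw [hd, hdiag, hexp, hcard]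
    ring
  -- combining sigma2 and the cross sum
  have h3 : (∑ i, ∑ j ∈ univ.filter (fun j => i < j), (B i i * B j j - B i j * B j i))
      + (∑ i, ∑ j ∈ univ.filter (fun j => i < j), B i j * B j i)
      = ∑ i, ∑ j ∈ univ.filter (fun j => i < j), B i i * B j j := by
    rw [← Finset.sum_add_distrib]
    exact Finset.sum_congr rfl fun i _ => by
      rw [← Finset.sum_add_distrib]
      exact Finset.sum_congr rfl fun j _ => by ring
  -- rewrite last sum's filter
  have h4 : (∑ i ∈ s, ∑ j ∈ univ.filter (fun j => i < j ∧ j ≠ k), (B i i - B j j) ^ 2)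
      = ∑ i ∈ s, ∑ j ∈ s.filter (fun j => i < j), (B i i - B j j) ^ 2 :=
    Finset.sum_congr rfl fun i _ => by rw [hfilt i]
  rw [h4]
  have hsum : ((n : ℝ) / (2 * ((n : ℝ) - 1))) * ((∑ i, B i i) - B k k) ^ 2
      + (1 / (2 * ((n : ℝ) - 1))) *
        (∑ i ∈ s, ∑ j ∈ s.filter (fun j => i < j), (B i i - B j j) ^ 2)
      = ((∑ i, B i i) - B k k) ^ 2 / 2 + ((∑ i, B i i ^ 2) - B k k ^ 2) / 2 := by
    have hR : (∑ i ∈ s, ∑ j ∈ s.filter (fun j => i < j), (B i i - B j j) ^ 2)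
        = ((n:ℝ) - 1) * ((∑ i, B i i ^ 2) - B k k ^ 2)
          - ((∑ i, B i i) - B k k) * ((∑ i, B i i) - B k k) := by
      have := h2
      rw [hT, hQ] at this
      linarith
    rw [hR]
    field_simp
    ring
  linear_combination -h3 - hsum - h1 / 2
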